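/- Let $\pi : B \to A$ be a ring homomorphism of commutative $\mathbb{Z}_{(p)}$-algebras, and let $b, b' \in B$ with $\pi(b) = \pi(b')$. Suppose $s := b - b'$ satisfies $p^n s = 0$ for some $n > 0$ and $s^{p^k} \in pB$ for some $k > 0$. Then there exists $m > 0$ such that $b^{p^m} = (b')^{p^m}$. -/

import Mathlib

/-- Let `π : B → A` be a ring homomorphism of commutative `ℤ_(p)`-algebras, and let
`b, b' ∈ B` with `π b = π b'`. Suppose `s := b - b'` satisfies `p ^ n * s = 0` for some
`n > 0` and `s ^ p ^ k = p * t` for some `k > 0` and `t ∈ B`. Then there exists `m > 0`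
such that `b ^ p ^ m = b' ^ p ^ m`. -/
theorem stmt_4 {A B : Type*} [CommRing A] [CommRing B] (p : ℕ) (hp : p.Prime)
    (hZpA : ∀ q : ℕ, q.Prime → q ≠ p → IsUnit (q : A))
    (hZpB : ∀ q : ℕ, q.Prime → q ≠ p → IsUnit (q : B))
    (π : B →+* A) (b b' : B) (hbb : π b = π b')
    (s : B) (hs : s = b - b')
    (n : ℕ) (hn : 0 < n) (hns : (p : B) ^ n * s = 0)
    (k : ℕ) (hk : 0 < k) (t : B) (hst : s ^ p ^ k = (p : B) * t) :
    ∃ m : ℕ, 0 < m ∧ b ^ p ^ m = b' ^ p ^ m := by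
  have hp1 := hp.one_lt
  set N : ℕ := n * p ^ k + 1 with hN
  have hsN : s ^ N = 0 := by
    have h1 : s ^ N = t ^ n * ((p : B) ^ n * s) := by
      rw [hN, pow_succ, pow_mul', hst, mul_pow]; ring
    rw [h1, hns, mul_zero]
  refine ⟨n + N, by positivity, ?_⟩
  set m : ℕ := n + N with hm
  have hmlt : m < p ^ m := Nat.lt_pow_self hp1
  have key : ∀ i : ℕ, 0 < i → ((p ^ m).choose i : B) * s ^ i = 0 := by
    intro i hi
    rcases le_or_gt N i with h | h
    · have h2 : s ^ i = 0 := by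
        rw [← Nat.sub_add_cancel h, pow_add, hsN, mul_zero]
      rw [h2, mul_zero]
    · have hiN : i ≤ p ^ m := by omega
      have hv : multiplicity p i < N :=
        lt_trans (lt_of_lt_of_le (Nat.lt_pow_self hp1)
          (Nat.le_of_dvd hi (pow_multiplicity_dvd p i))) h
      have hdvd : p ^ n ∣ (p ^ m).choose i := by
        apply pow_dvd_of_le_emultiplicity
        rw [Nat.Prime.emultiplicity_choose_prime_pow hp hiN hi.ne']
        exact_mod_cast Nat.cast_le.mpr (by omega : n ≤ m - multiplicity p i)
      obtain ⟨c, hc⟩ := hdvd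
      have hc' : ((p ^ m).choose i : B) = (p : B) ^ n * (c : B) := by
        rw [hc]; push_cast; ring
      rw [hc', ← Nat.succ_pred_eq_of_pos hi, pow_succ]
      calc (p : B) ^ n * (c : B) * (s ^ (i - 1) * s)
          = (c : B) * s ^ (i - 1) * ((p : B) ^ n * s) := by ring
        _ = 0 := by rw [hns, mul_zero]
  have hb : b = b' + s := by rw [hs]; ring
  rw [hb, add_pow, Finset.sum_range_succ]
  have hrest : ∀ j ∈ Finset.range (p ^ m),
      b' ^ j * s ^ (p ^ m - j) * ((p ^ m).choose j : B) = 0 := by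
    intro j hj
    have hj' : j < p ^ m := Finset.mem_range.mp hj
    have h0 : 0 < p ^ m - j := Nat.sub_pos_of_lt hj'
    rw [← Nat.choose_symm hj'.le]
    calc b' ^ j * s ^ (p ^ m - j) * ((p ^ m).choose (p ^ m - j) : B)
        = b' ^ j * (((p ^ m).choose (p ^ m - j) : B) * s ^ (p ^ m - j)) := by ring
      _ = 0 := by rw [key _ h0, mul_zero]
  rw [Finset.sum_eq_zero hrest]
  simp
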